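/- Let α be an irrational real number with convergents pₙ/qₙ, and suppose the partial quotients of α in positions k+1, …, k+m coincide with those of an irrational α′ (convergents p′ₙ/q′ₙ) in positions l+1, …, l+m, for all members of an infinite family of triples (k,l,m) with the last-letter normalization that a_k ≠ a′_l whenever min(k,l) ≥ 3. Define the matrix [[c,−d],[a,−b]] = [[p_k, p_{k−1}],[q_k, q_{k−1}]]·[[q′_{l−1}, −p′_{l−1}],[−q′_l, p′_l]]. Then this matrix has determinant ±1, and if the family contains triples with both k and l strictly increasing, then max(|a|,|b|,|c|,|d|) tends to infinity along the family. -/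

import Mathlib

/-- `a` is the continued fraction expansion of `α` (via the Gauss map):
`a n = ⌊x n⌋` where `x 0 = α` and `x (n+1) = 1/(x n - ⌊x n⌋)`. -/
def IsCFOf (α : ℝ) (a : ℕ → ℤ) : Prop :=
  ∃ x : ℕ → ℝ, x 0 = α ∧ (∀ n, a n = ⌊x n⌋) ∧ ∀ n, x (n + 1) = 1 / (x n - ⌊x n⌋)

/-- `p n`, `q n` are the convergent numerators/denominators of the continued
fraction with partial quotients `a`, shifted by one: `p (n+1)/q (n+1)` is the
`n`-th convergent `pₙ/qₙ`, and `p 0 = p₋₁ = 1`, `q 0 = q₋₁ = 0`. -/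
def IsConvergentsOf (a : ℕ → ℤ) (p q : ℕ → ℤ) : Prop :=
  p 0 = 1 ∧ p 1 = a 0 ∧ (∀ n, p (n + 2) = a (n + 1) * p (n + 1) + p n) ∧
  q 0 = 0 ∧ q 1 = 1 ∧ (∀ n, q (n + 2) = a (n + 1) * q (n + 1) + q n)

/-- The matrix `[[c,−d],[a,−b]] = [[p_k, p_{k−1}],[q_k, q_{k−1}]] ·
[[q′_{l−1}, −p′_{l−1}],[−q′_l, p′_l]]` (shifted indexing: `p_k = p (k+1)`). -/
def Dmat (p q p' q' : ℕ → ℤ) (k l : ℕ) : Matrix (Fin 2) (Fin 2) ℤ :=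
  !![p (k + 1), p k; q (k + 1), q k] * !![q' l, -p' l; -q' (l + 1), p' (l + 1)]

namespace Stmt19Aux

def Lm (b : ℤ) : Matrix (Fin 2) (Fin 2) ℤ := !![b, 1; 1, 0]

def Wp (s : List ℤ) : Matrix (Fin 2) (Fin 2) ℤ := (s.map Lm).prod

lemma Wp_nil : Wp [] = 1 := rfl

lemma Wp_cons (b : ℤ) (s : List ℤ) : Wp (b :: s) = Lm b * Wp s := by
  simp [Wp]

lemma Wp_concat (s : List ℤ) (b : ℤ) : Wp (s ++ [b]) = Wp s * Lm b := by
  simp [Wp]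

lemma Wp_cons_eq (b : ℤ) (s : List ℤ) :
    Wp (b :: s) = !![b * Wp s 0 0 + Wp s 1 0, b * Wp s 0 1 + Wp s 1 1;
                     Wp s 0 0, Wp s 0 1] := by
  rw [Wp_cons, Lm]
  conv_lhs => rw [Matrix.eta_fin_two (Wp s), Matrix.mul_fin_two]
  norm_num

lemma Wp_cons_apply (b : ℤ) (s : List ℤ) :
    Wp (b :: s) 0 0 = b * Wp s 0 0 + Wp s 1 0 ∧
    Wp (b :: s) 0 1 = b * Wp s 0 1 + Wp s 1 1 ∧
    Wp (b :: s) 1 0 = Wp s 0 0 ∧ Wp (b :: s) 1 1 = Wp s 0 1 := by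
  rw [Wp_cons_eq]
  norm_num

lemma Wp_det (s : List ℤ) : (Wp s).det = (-1) ^ s.length := by
  induction s with
  | nil => simp [Wp_nil]
  | cons b t ih =>
      rw [Wp_cons, Matrix.det_mul, ih, Lm, Matrix.det_fin_two_of]
      simp [pow_succ]

/-- basic positivity invariants for word products -/
lemma Wp_inv (s : List ℤ) (hs : ∀ b ∈ s, 1 ≤ b) :
    1 ≤ Wp s 0 0 ∧ 0 ≤ Wp s 1 0 ∧ Wp s 1 0 ≤ Wp s 0 0 ∧
    0 ≤ Wp s 0 1 ∧ 0 ≤ Wp s 1 1 ∧ 1 ≤ Wp s 0 1 + Wp s 1 1 := by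
  induction s with
  | nil =>
      norm_num [Wp_nil, Matrix.one_apply]
  | cons b t ih =>
      have hb : 1 ≤ b := hs b (by simp)
      obtain ⟨h1, h2, h3, h4, h5, h6⟩ := ih (fun c hc => hs c (by simp [hc]))
      rw [Wp_cons_eq]
      simp only [Matrix.cons_val', Matrix.cons_val_zero, Matrix.cons_val_one,
        Matrix.head_cons, Matrix.empty_val', Matrix.cons_val_fin_one, Matrix.head_fin_const,
        Matrix.of_apply]
      refine ⟨?_, ?_, ?_, ?_, ?_, ?_⟩ <;> nlinarith

lemma Wp_00_pos (s : List ℤ) (hs : ∀ b ∈ s, 1 ≤ b) : 1 ≤ Wp s 0 0 := (Wp_inv s hs).1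

lemma Wp_01_pos (s : List ℤ) (hs : ∀ b ∈ s, 1 ≤ b) (hne : s ≠ []) : 1 ≤ Wp s 0 1 := by
  match s with
  | b :: t =>
    have hb : 1 ≤ b := hs b (by simp)
    obtain ⟨h1, h2, h3, h4, h5, h6⟩ := Wp_inv t (fun c hc => hs c (by simp [hc]))
    rw [Wp_cons_eq]
    simp only [Matrix.cons_val', Matrix.cons_val_zero, Matrix.cons_val_one,
      Matrix.head_cons, Matrix.empty_val', Matrix.cons_val_fin_one, Matrix.of_apply]
    nlinarith

lemma Wp_10_pos (s : List ℤ) (hs : ∀ b ∈ s, 1 ≤ b) (hne : s ≠ []) : 1 ≤ Wp s 1 0 := by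
  match s with
  | b :: t =>
    rw [Wp_cons_eq]
    simpa using Wp_00_pos t (fun c hc => hs c (by simp [hc]))

theorem Wp_inj (s : List ℤ) : ∀ (s' : List ℤ), (∀ b ∈ s, 1 ≤ b) → (∀ b ∈ s', 1 ≤ b) →
    Wp s = Wp s' → s = s' := by
  induction s with
  | nil =>
      intro s' _ hs' he
      match s' with
      | [] => rfl
      | b :: t =>
        exfalso
        have := Wp_01_pos (b :: t) hs' (by simp)
        rw [← he, Wp_nil] at this
        simp [Matrix.one_apply] at this
  | cons b t ih =>
      intro s' hs hs' he
      match s' with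
      | [] =>
        exfalso
        have := Wp_01_pos (b :: t) hs (by simp)
        rw [he, Wp_nil] at this
        simp [Matrix.one_apply] at this
      | b' :: t' =>
        -- case on t, t' empty
        have hbt : ∀ c ∈ t, 1 ≤ c := fun c hc => hs c (by simp [hc])
        have hbt' : ∀ c ∈ t', 1 ≤ c := fun c hc => hs' c (by simp [hc])
        have h01 : Wp t 0 1 = Wp t' 0 1 := by
          have := congrFun (congrFun he 1) 1
          rwa [Wp_cons_eq, Wp_cons_eq] at this
        cases t with
        | nil =>
          cases t' with
          | nil =>
              have h00 := congrFun (congrFun he 0) 0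
              rw [Wp_cons_eq, Wp_cons_eq] at h00
              simp [Wp_nil, Matrix.one_apply] at h00
              rw [h00]
          | cons c' u' =>
              exfalso
              have := Wp_01_pos (c' :: u') hbt' (by simp)
              rw [← h01, Wp_nil] at this
              simp [Matrix.one_apply] at this
        | cons c u =>
          cases t' with
          | nil =>
              exfalso
              have := Wp_01_pos (c :: u) hbt (by simp)
              rw [h01, Wp_nil] at this
              simp [Matrix.one_apply] at this
          | cons c' u' =>
              have hE : ∀ i j, Wp (b::(c::u)) i j = Wp (b'::(c'::u')) i j :=
                fun i j => congrFun (congrFun he i) j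
              have h00 := hE 0 0
              have h01' := hE 0 1
              have h10 := hE 1 0
              rw [(Wp_cons_apply b (c::u)).1, (Wp_cons_apply b' (c'::u')).1] at h00
              rw [(Wp_cons_apply b (c::u)).2.1, (Wp_cons_apply b' (c'::u')).2.1] at h01'
              rw [(Wp_cons_apply b (c::u)).2.2.1, (Wp_cons_apply b' (c'::u')).2.2.1] at h10
              have hD : 1 ≤ Wp (c::u) 1 0 := Wp_10_pos _ hbt (by simp)
              have hD' : 1 ≤ Wp (c'::u') 1 0 := Wp_10_pos _ hbt' (by simp)
              have hDC : Wp (c::u) 1 0 ≤ Wp (c::u) 0 0 := (Wp_inv _ hbt).2.2.1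
              have hDC' : Wp (c'::u') 1 0 ≤ Wp (c'::u') 0 0 := (Wp_inv _ hbt').2.2.1
              have hC : 1 ≤ Wp (c::u) 0 0 := Wp_00_pos _ hbt
              have hC0 : 0 ≤ Wp (c::u) 0 0 := by omega
              have key : (b - b') * Wp (c::u) 0 0
                  = Wp (c'::u') 1 0 - Wp (c::u) 1 0 := by
                rw [← h10] at h00
                linear_combination h00
              have hbb : b = b' := by
                rcases lt_trichotomy b b' with hlt | heq | hgt
                · exfalso
                  have : (b - b') * Wp (c::u) 0 0 ≤ -1 * Wp (c::u) 0 0 :=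
                    mul_le_mul_of_nonneg_right (by omega) hC0
                  rw [← h10] at hDC'
                  linarith
                · exact heq
                · exfalso
                  have : 1 * Wp (c::u) 0 0 ≤ (b - b') * Wp (c::u) 0 0 :=
                    mul_le_mul_of_nonneg_right (by omega) hC0
                  rw [← h10] at hDC'
                  linarith
              subst hbb
              have e10 : Wp (c::u) 1 0 = Wp (c'::u') 1 0 := by
                rw [h10] at h00; linarith
              have e11 : Wp (c::u) 1 1 = Wp (c'::u') 1 1 := by
                rw [h01] at h01'; linarith
              have hWeq : Wp (c::u) = Wp (c'::u') := by
                rw [Matrix.eta_fin_two (Wp (c::u)), Matrix.eta_fin_two (Wp (c'::u'))]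
                rw [h10, h01, e10, e11]
              have := ih (c'::u') hbt hbt' hWeq
              rw [this]



def Nm (p q : ℕ → ℤ) (k : ℕ) : Matrix (Fin 2) (Fin 2) ℤ :=
  !![p (k + 1), p k; q (k + 1), q k]

lemma a_pos {α : ℝ} {a : ℕ → ℤ} (hα : Irrational α) (hcf : IsCFOf α a) :
    ∀ n, 1 ≤ a (n + 1) := by
  obtain ⟨x, hx0, hxa, hxr⟩ := hcf
  have hirr : ∀ n, Irrational (x n) := by
    intro n
    induction n with
    | zero => rwa [hx0]
    | succ n ih =>
        rw [hxr n, one_div]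
        exact (ih.sub_intCast _).inv
  intro n
  have hfr0 : (0:ℝ) < x n - ⌊x n⌋ :=
    sub_pos.mpr (lt_of_le_of_ne (Int.floor_le _) (Ne.symm ((hirr n).ne_int _)))
  have hfr1 : x n - ⌊x n⌋ < 1 := by
    have := Int.lt_floor_add_one (x n); linarith
  have hx1 : (1:ℝ) < x (n+1) := by
    rw [hxr n, lt_div_iff₀ hfr0]; linarith
  rw [hxa (n+1)]
  exact Int.le_floor.mpr (by exact_mod_cast hx1.le)

section Conv
variable {a p q : ℕ → ℤ}

lemma Nm_succ (h : IsConvergentsOf a p q) (n : ℕ) :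
    Nm p q (n + 1) = Nm p q n * Lm (a (n + 1)) := by
  obtain ⟨hp0, hp1, hp2, hq0, hq1, hq2⟩ := h
  ext i j
  fin_cases i <;> fin_cases j <;>
    simp [Nm, Lm, Matrix.mul_apply, Fin.sum_univ_two, hp2 n, hq2 n] <;> ring

lemma Nm_det (h : IsConvergentsOf a p q) (n : ℕ) :
    (Nm p q n).det = (-1) ^ (n + 1) := by
  induction n with
  | zero => simp [Nm, Matrix.det_fin_two_of, h.1, h.2.1, h.2.2.2.1, h.2.2.2.2.1]
  | succ n ih =>
      rw [Nm_succ h n, Matrix.det_mul, ih, Lm, Matrix.det_fin_two_of]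
      ring

lemma Nm_add (h : IsConvergentsOf a p q) (k n : ℕ) :
    Nm p q (k + n) = Nm p q k * Wp (List.ofFn fun i : Fin n => a (k + 1 + i)) := by
  induction n with
  | zero => simp [Wp_nil]
  | succ n ih =>
      have harg : (List.ofFn fun i : Fin (n+1) => a (k + 1 + i))
          = (List.ofFn fun i : Fin n => a (k + 1 + i)) ++ [a (k + n + 1)] := by
        rw [show k + n + 1 = k + 1 + n by omega, List.ofFn_succ', List.concat_eq_append]
        rfl
      rw [harg, Wp_concat, show k + (n+1) = (k + n) + 1 by ring, Nm_succ h (k + n), ih,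
        mul_assoc]

end Conv

lemma smul_cancel {e : ℤ} (he : e = 1 ∨ e = -1) {A B : Matrix (Fin 2) (Fin 2) ℤ}
    (h : e • A = e • B) : A = B := by
  rcases he with rfl | rfl
  · simpa using h
  · simpa [neg_smul, neg_inj] using h

lemma neg_one_pow (n : ℕ) : ((-1 : ℤ)) ^ n = 1 ∨ ((-1 : ℤ)) ^ n = -1 := by
  rcases Nat.even_or_odd n with he | ho
  · left; exact he.neg_one_pow
  · right; exact ho.neg_one_pow

/-- abstract form of the rigidity argument -/
lemma words_eq {N B : Matrix (Fin 2) (Fin 2) ℤ}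
    (hdN : N.det = 1 ∨ N.det = -1) (hdB : B.det = 1 ∨ B.det = -1)
    (w w' : List ℤ) (hw : ∀ b ∈ w, 1 ≤ b) (hw' : ∀ b ∈ w', 1 ≤ b)
    (heq : N * B.adjugate = (N * Wp w) * (B * Wp w').adjugate) : w' = w := by
  have esm : ∀ X : Matrix (Fin 2) (Fin 2) ℤ, X * (B.det • 1) = B.det • X := fun X => by
    rw [Matrix.mul_smul, mul_one]
  have e1 := congrArg (fun M => M * B) heq
  rw [Matrix.adjugate_mul_distrib] at e1
  simp only [mul_assoc] at e1
  rw [Matrix.adjugate_mul] at e1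
  simp only [esm, Matrix.mul_smul] at e1
  have step1 : N = N * (Wp w * (Wp w').adjugate) := by
    have := smul_cancel hdB e1
    simpa only [mul_assoc] using this
  have e2 := congrArg (fun M => N.adjugate * M) step1
  rw [← mul_assoc, Matrix.adjugate_mul, Matrix.smul_mul, one_mul] at e2
  have step2 : (1 : Matrix (Fin 2) (Fin 2) ℤ) = Wp w * (Wp w').adjugate :=
    smul_cancel hdN e2
  have step3 : Wp w' = (Wp w').det • Wp w := by
    calc Wp w' = 1 * Wp w' := (one_mul _).symm
      _ = Wp w * (Wp w').adjugate * Wp w' := by rw [← step2]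
      _ = Wp w * ((Wp w').adjugate * Wp w') := by rw [mul_assoc]
      _ = Wp w * ((Wp w').det • 1) := by rw [Matrix.adjugate_mul]
      _ = (Wp w').det • Wp w := by rw [Matrix.mul_smul, mul_one]
  have hdetw' : (Wp w').det = 1 ∨ (Wp w').det = -1 := by
    rw [Wp_det]; exact neg_one_pow _
  have hww : Wp w' = Wp w := by
    rcases hdetw' with hd | hd
    · rw [hd, one_smul] at step3; exact step3
    · exfalso
      rw [hd] at step3
      have h1 : 1 ≤ Wp w 0 0 := Wp_00_pos w hw
      have h2 : 1 ≤ Wp w' 0 0 := Wp_00_pos w' hw'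
      have := congrFun (congrFun step3 0) 0
      simp only [Matrix.smul_apply, neg_smul, one_smul, Matrix.neg_apply] at this
      omega
  exact Wp_inj w' w hw' hw hww

lemma rigid {a a' p q p' q' : ℕ → ℤ}
    (ha : ∀ n, 1 ≤ a (n + 1)) (ha' : ∀ n, 1 ≤ a' (n + 1))
    (h : IsConvergentsOf a p q) (h' : IsConvergentsOf a' p' q')
    {k1 k2 l1 l2 : ℕ} (hk : k1 < k2) (hl : l1 < l2)
    (heq : Nm p q k1 * (Nm p' q' l1).adjugate = Nm p q k2 * (Nm p' q' l2).adjugate) :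
    a k2 = a' l2 := by
  obtain ⟨n, rfl⟩ : ∃ d, k2 = k1 + (d + 1) := ⟨k2 - k1 - 1, by omega⟩
  obtain ⟨n', rfl⟩ : ∃ d, l2 = l1 + (d + 1) := ⟨l2 - l1 - 1, by omega⟩
  have hwmem : ∀ b ∈ (List.ofFn fun i : Fin (n+1) => a (k1 + 1 + i)), 1 ≤ b := by
    intro b hb
    rw [List.mem_ofFn] at hb
    obtain ⟨i, rfl⟩ := hb
    simpa [show k1 + i + 1 = k1 + 1 + i by omega] using ha (k1 + i)
  have hwmem' : ∀ b ∈ (List.ofFn fun i : Fin (n'+1) => a' (l1 + 1 + i)), 1 ≤ b := by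
    intro b hb
    rw [List.mem_ofFn] at hb
    obtain ⟨i, rfl⟩ := hb
    simpa [show l1 + i + 1 = l1 + 1 + i by omega] using ha' (l1 + i)
  rw [Nm_add h k1 (n+1), Nm_add h' l1 (n'+1)] at heq
  have hlist := words_eq (by rw [Nm_det h]; exact neg_one_pow _)
    (by rw [Nm_det h']; exact neg_one_pow _) _ _ hwmem hwmem' heq
  have hlen : n' = n := by
    have := congrArg List.length hlist
    simp only [List.length_ofFn] at this
    omega
  subst n'
  have hfun := List.ofFn_injective hlist
  have := congrFun hfun (Fin.last n)
  simp only [Fin.val_last] at this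
  rw [show l1 + 1 + n = l1 + (n + 1) by omega, show k1 + 1 + n = k1 + (n + 1) by omega]
    at this
  exact this.symm


lemma Dmat_eq (p q p' q' : ℕ → ℤ) (kk ll : ℕ) :
    Dmat p q p' q' kk ll = Nm p q kk * (Nm p' q' ll).adjugate := by
  rw [Dmat, Nm, Nm, Matrix.adjugate_fin_two]
  norm_num

end Stmt19Aux

/-- along an infinite family of triples `(kⱼ, lⱼ, mⱼ)` with
matching blocks `a_{kⱼ+1}⋯a_{kⱼ+mⱼ} = a′_{lⱼ+1}⋯a′_{lⱼ+mⱼ}` and the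
normalization `a_{kⱼ} ≠ a′_{lⱼ}` whenever `min(kⱼ,lⱼ) ≥ 3`, the matrices
`Dmat` have determinant `±1`, and if `k` and `l` are strictly increasing then
the maximum of the absolute values of the four entries tends to infinity. -/
theorem stmt19 (α α' : ℝ) (hα : Irrational α) (hα' : Irrational α')
    (a a' : ℕ → ℤ) (hcf : IsCFOf α a) (hcf' : IsCFOf α' a')
    (p q p' q' : ℕ → ℤ) (h : IsConvergentsOf a p q) (h' : IsConvergentsOf a' p' q')
    (k l m : ℕ → ℕ) (hm : ∀ j, 1 ≤ m j)
    (hagree : ∀ j, ∀ i, 1 ≤ i → i ≤ m j → a (k j + i) = a' (l j + i))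
    (hnorm : ∀ j, 3 ≤ min (k j) (l j) → a (k j) ≠ a' (l j)) :
    (∀ j, (Dmat p q p' q' (k j) (l j)).det = 1 ∨ (Dmat p q p' q' (k j) (l j)).det = -1) ∧
    (StrictMono k → StrictMono l →
      Filter.Tendsto (fun j =>
        max (max |Dmat p q p' q' (k j) (l j) 0 0| |Dmat p q p' q' (k j) (l j) 0 1|)
            (max |Dmat p q p' q' (k j) (l j) 1 0| |Dmat p q p' q' (k j) (l j) 1 1|))
        Filter.atTop Filter.atTop) := by
  classical
  open Stmt19Aux in
  have hDm : ∀ kk ll, Dmat p q p' q' kk ll = Nm p q kk * (Nm p' q' ll).adjugate :=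
    Dmat_eq p q p' q'
  constructor
  · intro j
    rw [hDm, Matrix.det_mul]
    have hadj : (Nm p' q' (l j)).adjugate.det = (Nm p' q' (l j)).det := by
      rw [Matrix.det_adjugate]
      norm_num
    rw [hadj, Nm_det h, Nm_det h', ← pow_add]
    exact neg_one_pow _
  · intro hk hl
    rw [Filter.tendsto_atTop]
    by_contra hB
    push_neg at hB
    obtain ⟨b, hb⟩ := hB
    have hS : {j | max (max |Dmat p q p' q' (k j) (l j) 0 0| |Dmat p q p' q' (k j) (l j) 0 1|)
        (max |Dmat p q p' q' (k j) (l j) 1 0| |Dmat p q p' q' (k j) (l j) 1 1|) < b}.Infinite :=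
      Nat.frequently_atTop_iff_infinite.mp hb
    set S := {j | max (max |Dmat p q p' q' (k j) (l j) 0 0| |Dmat p q p' q' (k j) (l j) 0 1|)
        (max |Dmat p q p' q' (k j) (l j) 1 0| |Dmat p q p' q' (k j) (l j) 1 1|) < b} with hSdef
    set F : ℕ → Matrix (Fin 2) (Fin 2) ℤ := fun j => Dmat p q p' q' (k j) (l j) with hFdef
    have key : ∃ j1 ∈ S ∩ Set.Ici 3, ∃ j2 ∈ S ∩ Set.Ici 3, j1 < j2 ∧ F j1 = F j2 := by
      by_contra hno
      push_neg at hno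
      have hinj : Set.InjOn F (S ∩ Set.Ici 3) := by
        intro x hx y hy hxy
        by_contra hne
        rcases Nat.lt_or_ge x y with hlt | hge
        · exact hno x hx y hy hlt hxy
        · exact hno y hy x hx (by omega) hxy.symm
      have hSI : (S ∩ Set.Ici 3).Infinite := by
        have he : S ∩ Set.Ici 3 = S \ Set.Iio 3 := by
          ext j
          simp only [Set.mem_inter_iff, Set.mem_Ici, Set.mem_diff, Set.mem_Iio]
          constructor
          · rintro ⟨h1, h2⟩; exact ⟨h1, by omega⟩
          · rintro ⟨h1, h2⟩; exact ⟨h1, by omega⟩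
        rw [he]
        exact hS.diff (Set.finite_Iio 3)
      have himg : (F '' (S ∩ Set.Ici 3)).Infinite := hSI.image hinj
      have hsub : F '' (S ∩ Set.Ici 3) ⊆
          (Set.univ.pi fun _ : Fin 2 => Set.univ.pi fun _ : Fin 2 => Set.Ioo (-b) b) := by
        rintro M ⟨j, ⟨hjS, _⟩, rfl⟩
        have hj : max (max |F j 0 0| |F j 0 1|) (max |F j 1 0| |F j 1 1|) < b := hjS
        simp only [max_lt_iff] at hj
        obtain ⟨⟨h00, h01⟩, h10, h11⟩ := hj
        intro i _
        intro i' _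
        simp only [Set.mem_Ioo]
        fin_cases i <;> fin_cases i' <;>
          [exact abs_lt.mp h00; exact abs_lt.mp h01; exact abs_lt.mp h10; exact abs_lt.mp h11]
      exact himg (((Set.Finite.pi fun _ => Set.Finite.pi fun _ =>
        Set.finite_Ioo (-b) b)).subset hsub)
    obtain ⟨j1, ⟨hj1S, hj1i⟩, j2, ⟨hj2S, hj2i⟩, hlt, hFeq⟩ := key
    have heq : Nm p q (k j1) * (Nm p' q' (l j1)).adjugate
        = Nm p q (k j2) * (Nm p' q' (l j2)).adjugate := by
      rw [← hDm, ← hDm]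
      exact hFeq
    have hlast := rigid (a_pos hα hcf) (a_pos hα' hcf') h h' (hk hlt) (hl hlt) heq
    have hmin : 3 ≤ min (k j2) (l j2) := by
      have h1 : j2 ≤ k j2 := hk.le_apply
      have h2 : j2 ≤ l j2 := hl.le_apply
      have h3 : 3 ≤ j2 := hj2i
      omega
    exact hnorm j2 hmin hlast
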